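/- Let (Ω,F,ℙ) be a probability space and A_n ∈ F, n ∈ ℕ, with Σ_{n=1}^∞ ℙ(A_n) = ∞. Then ℙ(limsup_{n→∞} A_n) ≥ limsup_{N→∞} (Σ_{n=1}^N ℙ(A_n))² / (Σ_{n=1}^N Σ_{l=1}^N ℙ(A_n ∩ A_l)). -/

import Mathlib

open MeasureTheory Filter Topology Set
open scoped ENNReal

lemma kochenCS {Ω : Type*} [MeasurableSpace Ω] (P : Measure Ω) (A : ℕ → Set Ω)
    (hA : ∀ n, MeasurableSet (A n)) (M N : ℕ) :
    (∑ n ∈ Finset.Ico M N, P (A n)) ^ 2 ≤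
      (∑ n ∈ Finset.Ico M N, ∑ l ∈ Finset.Ico M N, P (A n ∩ A l)) *
        P (⋃ n ∈ Finset.Ico M N, A n) := by
  set U : Set Ω := ⋃ n ∈ Finset.Ico M N, A n with hUdef
  have hU : MeasurableSet U := (Finset.Ico M N).measurableSet_biUnion (fun n _ => hA n)
  set f : Ω → ℝ≥0∞ := fun ω => ∑ n ∈ Finset.Ico M N, (A n).indicator 1 ω with hfdef
  have hfm : Measurable f := by
    apply Finset.measurable_sum
    exact fun n _ => measurable_const.indicator (hA n)
  set g : Ω → ℝ≥0∞ := U.indicator 1 with hgdef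
  have hgm : Measurable g := measurable_const.indicator hU
  have hfg : ∀ ω, (f * g) ω = f ω := by
    intro ω
    by_cases h : ω ∈ U
    · simp [hgdef, Set.indicator_of_mem h]
    · have : f ω = 0 := by
        apply Finset.sum_eq_zero
        intro n hn
        have : ω ∉ A n := fun hω => h (Set.mem_biUnion hn hω)
        simp [Set.indicator_of_notMem this]
      simp [this]
  have hpq : (2:ℝ).HolderConjugate 2 := by
    rw [Real.holderConjugate_iff]; norm_num
  have hold := ENNReal.lintegral_mul_le_Lp_mul_Lq P hpq hfm.aemeasurable hgm.aemeasurable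
  have hrpow2 : ∀ x : ℝ≥0∞, x ^ (2:ℝ) = x * x := by
    intro x
    rw [show (2:ℝ) = ((2:ℕ):ℝ) by norm_num, ENNReal.rpow_natCast, sq]
  have h1 : ∫⁻ ω, (f * g) ω ∂P = ∑ n ∈ Finset.Ico M N, P (A n) := by
    simp only [hfg]
    show ∫⁻ ω, ∑ n ∈ Finset.Ico M N, (A n).indicator 1 ω ∂P = _
    rw [lintegral_finset_sum (f := fun n (ω : Ω) => (A n).indicator 1 ω) _
      (fun n _ => measurable_const.indicator (hA n))]
    simp [lintegral_indicator_one (hA _)]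
  have h2 : ∫⁻ ω, f ω ^ (2:ℝ) ∂P
      = ∑ n ∈ Finset.Ico M N, ∑ l ∈ Finset.Ico M N, P (A n ∩ A l) := by
    have hpt : ∀ ω, f ω ^ (2:ℝ)
        = ∑ n ∈ Finset.Ico M N, ∑ l ∈ Finset.Ico M N, (A n ∩ A l).indicator 1 ω := by
      intro ω
      rw [hrpow2, hfdef]
      rw [Finset.sum_mul_sum]
      refine Finset.sum_congr rfl fun n _ => Finset.sum_congr rfl fun l _ => ?_
      rw [Set.inter_indicator_one]
      rfl
    simp only [hpt]
    rw [lintegral_finset_sum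
      (f := fun n (ω : Ω) => ∑ l ∈ Finset.Ico M N, (A n ∩ A l).indicator 1 ω) _
      (fun n _ => Finset.measurable_sum _
        (fun l _ => measurable_const.indicator ((hA n).inter (hA l))))]
    refine Finset.sum_congr rfl fun n _ => ?_
    rw [lintegral_finset_sum (f := fun l (ω : Ω) => (A n ∩ A l).indicator 1 ω) _
      (fun l _ => measurable_const.indicator ((hA n).inter (hA l)))]
    simp [lintegral_indicator_one ((hA _).inter (hA _))]
  have h3 : ∫⁻ ω, g ω ^ (2:ℝ) ∂P = P U := by
    have hpt : ∀ ω, g ω ^ (2:ℝ) = U.indicator 1 ω := by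
      intro ω
      rw [hrpow2, hgdef]
      by_cases h : ω ∈ U <;> simp [Set.indicator_of_mem, Set.indicator_of_notMem, h]
    simp only [hpt]
    exact lintegral_indicator_one hU
  rw [h1, h2, h3] at hold
  have hsq := ENNReal.rpow_le_rpow hold (by norm_num : (0:ℝ) ≤ 2)
  calc (∑ n ∈ Finset.Ico M N, P (A n)) ^ 2
      = (∑ n ∈ Finset.Ico M N, P (A n)) ^ (2:ℝ) := by
        rw [show (2:ℝ) = ((2:ℕ):ℝ) by norm_num, ENNReal.rpow_natCast]
    _ ≤ (((∑ n ∈ Finset.Ico M N, ∑ l ∈ Finset.Ico M N, P (A n ∩ A l)) ^ (1/2:ℝ)) *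
          (P U ^ (1/2:ℝ))) ^ (2:ℝ) := hsq
    _ = (∑ n ∈ Finset.Ico M N, ∑ l ∈ Finset.Ico M N, P (A n ∩ A l)) * P U := by
        rw [ENNReal.mul_rpow_of_nonneg _ _ (by norm_num : (0:ℝ) ≤ 2),
          ← ENNReal.rpow_mul, ← ENNReal.rpow_mul]
        norm_num

lemma kochenCSReal {Ω : Type*} [MeasurableSpace Ω] (P : Measure Ω) [IsProbabilityMeasure P]
    (A : ℕ → Set Ω) (hA : ∀ n, MeasurableSet (A n)) (M N : ℕ)
    (hCS : (∑ n ∈ Finset.Ico M N, P (A n)) ^ 2 ≤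
      (∑ n ∈ Finset.Ico M N, ∑ l ∈ Finset.Ico M N, P (A n ∩ A l)) *
        P (⋃ n ∈ Finset.Ico M N, A n)) :
    (∑ n ∈ Finset.Ico M N, (P (A n)).toReal) ^ 2 ≤
      (∑ n ∈ Finset.Ico M N, ∑ l ∈ Finset.Ico M N, (P (A n ∩ A l)).toReal) *
        (P (⋃ i, A (i + M))).toReal := by
  have hsub : (⋃ n ∈ Finset.Ico M N, A n) ⊆ ⋃ i, A (i + M) := by
    intro x hx
    rcases Set.mem_iUnion₂.1 hx with ⟨n, hn, hxn⟩
    have hMn : M ≤ n := (Finset.mem_Ico.1 hn).1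
    exact Set.mem_iUnion.2 ⟨n - M, by rwa [Nat.sub_add_cancel hMn]⟩
  have h := hCS.trans (mul_le_mul_right (measure_mono hsub) _)
  have hTne : (∑ n ∈ Finset.Ico M N, ∑ l ∈ Finset.Ico M N, P (A n ∩ A l)) ≠ ⊤ :=
    (ENNReal.sum_lt_top.2 fun n _ => ENNReal.sum_lt_top.2 fun l _ => measure_lt_top P _).ne
  have h' := ENNReal.toReal_mono (ENNReal.mul_ne_top hTne (measure_ne_top P _)) h
  rw [ENNReal.toReal_mul, ENNReal.toReal_pow, ENNReal.toReal_sum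
    (fun n _ => measure_ne_top P _)] at h'
  rw [ENNReal.toReal_sum (fun n _ => (ENNReal.sum_lt_top.2
    fun l _ => measure_lt_top P _).ne)] at h'
  convert h' using 3 with _ n hn
  exact (ENNReal.toReal_sum (fun l _ => measure_ne_top P _)).symm

/-- a generalized Borel–Cantelli lemma. If `(Ω,F,ℙ)` is a probability
space and `A_n` are events with `Σ ℙ(A_n) = ∞`, then
`ℙ(limsup A_n) ≥ limsup_N (Σ_{n<N} ℙ(A_n))² / (Σ_{n<N} Σ_{l<N} ℙ(A_n ∩ A_l))`. -/
theorem stmt_1 {Ω : Type*} [MeasurableSpace Ω] (P : Measure Ω) [IsProbabilityMeasure P]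
    (A : ℕ → Set Ω) (hA : ∀ n, MeasurableSet (A n))
    (hdiv : ∑' n, P (A n) = ⊤) :
    limsup (fun N : ℕ =>
        (∑ n ∈ Finset.range N, (P (A n)).toReal) ^ 2 /
          ∑ n ∈ Finset.range N, ∑ l ∈ Finset.range N, (P (A n ∩ A l)).toReal) atTop
      ≤ (P (limsup A atTop)).toReal := by
  set S : ℕ → ℝ := fun N => ∑ n ∈ Finset.range N, (P (A n)).toReal with hSdef
  set T : ℕ → ℝ := fun N => ∑ n ∈ Finset.range N, ∑ l ∈ Finset.range N,
    (P (A n ∩ A l)).toReal with hTdef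
  show limsup (fun N => S N ^ 2 / T N) atTop ≤ _
  set r : ℕ → ℝ := fun N => S N ^ 2 / T N with hrdef
  -- tail unions
  set B : ℕ → Set Ω := fun M => ⋃ i, A (i + M) with hBdef
  have hBmeas : ∀ M, MeasurableSet (B M) := fun M => MeasurableSet.iUnion fun i => hA _
  have hBanti : Antitone B := by
    intro M M' h x hx
    rcases Set.mem_iUnion.1 hx with ⟨i, hi⟩
    exact Set.mem_iUnion.2 ⟨i + (M' - M), by rwa [show i + (M' - M) + M = i + M' by omega]⟩
  have htend : Tendsto (fun M => P (B M)) atTop (𝓝 (P (⋂ M, B M))) :=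
    tendsto_measure_iInter_atTop (fun M => (hBmeas M).nullMeasurableSet) hBanti
      ⟨0, measure_ne_top P _⟩
  have hInter : (⋂ M, B M) = limsup A atTop := by
    rw [limsup_eq_iInf_iSup_of_nat']
    simp only [hBdef, Set.iInf_eq_iInter, Set.iSup_eq_iUnion]
  have htendR : Tendsto (fun M => (P (B M)).toReal) atTop
      (𝓝 ((P (limsup A atTop)).toReal)) := by
    rw [← hInter]
    exact (ENNReal.tendsto_toReal (measure_ne_top P _)).comp htend
  -- suffices to bound by each tail measure
  suffices hM : ∀ M, limsup r atTop ≤ (P (B M)).toReal by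
    exact ge_of_tendsto htendR (Eventually.of_forall hM)
  -- S tends to infinity
  have hS : Tendsto S atTop atTop := by
    rw [tendsto_atTop]
    intro b
    have hts : Tendsto (fun N => ∑ n ∈ Finset.range N, P (A n)) atTop (𝓝 ⊤) := by
      rw [← hdiv]; exact ENNReal.tendsto_nat_tsum _
    have hev := (ENNReal.tendsto_nhds_top_iff_nnreal.1 hts) b.toNNReal
    filter_upwards [hev] with N hN
    have hfin : (∑ n ∈ Finset.range N, P (A n)) ≠ ⊤ :=
      (ENNReal.sum_lt_top.2 fun n _ => measure_lt_top P _).ne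
    have : ((b.toNNReal : ℝ≥0∞)).toReal ≤ (∑ n ∈ Finset.range N, P (A n)).toReal :=
      ENNReal.toReal_mono hfin hN.le
    rw [ENNReal.coe_toReal, ENNReal.toReal_sum (fun n _ => measure_ne_top P _)] at this
    calc b ≤ max b 0 := le_max_left _ _
      _ = (b.toNNReal : ℝ) := (Real.coe_toNNReal' b).symm
      _ ≤ S N := this
  have hSnonneg : ∀ N, (0:ℝ) ≤ S N :=
    fun N => Finset.sum_nonneg fun n _ => ENNReal.toReal_nonneg
  have hTS : ∀ N, S N ≤ T N := by
    intro N
    refine Finset.sum_le_sum fun n hn => ?_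
    have h1 : (P (A n)).toReal = (P (A n ∩ A n)).toReal := by rw [Set.inter_self]
    rw [h1]
    exact Finset.single_le_sum (f := fun l => (P (A n ∩ A l)).toReal)
      (fun l _ => ENNReal.toReal_nonneg) hn
  intro M
  set C : ℝ := (P (B M)).toReal with hCdef
  have hC0 : 0 ≤ C := ENNReal.toReal_nonneg
  have hC1 : C ≤ 1 := by
    calc C ≤ (1 : ℝ≥0∞).toReal := ENNReal.toReal_mono ENNReal.one_ne_top prob_le_one
      _ = 1 := by simp
  refine le_of_forall_pos_le_add fun δ hδ => ?_
  set ε : ℝ := δ / (1 + δ) with hεdef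
  have hε0 : 0 < ε := div_pos hδ (by linarith)
  have hε1 : ε < 1 := (div_lt_one (by linarith)).2 (by linarith)
  have hεδ : ε * (1 + δ) = δ := by
    rw [hεdef]; field_simp
  have hev : ∀ᶠ N in atTop, r N ≤ C + δ := by
    filter_upwards [hS.eventually_ge_atTop (2 * S M / ε), hS.eventually_ge_atTop 1,
      eventually_ge_atTop M] with N h1 h2 hMN
    have hTpos : (0:ℝ) < T N := lt_of_lt_of_le (by linarith) (hTS N)
    -- key inequality from Cauchy-Schwarz
    have hIco : S N - S M = ∑ n ∈ Finset.Ico M N, (P (A n)).toReal := by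
      rw [hSdef]
      exact (Finset.sum_Ico_eq_sub _ hMN).symm
    have hsubset : Finset.Ico M N ⊆ Finset.range N :=
      fun x hx => Finset.mem_range.2 (Finset.mem_Ico.1 hx).2
    have hT' : (∑ n ∈ Finset.Ico M N, ∑ l ∈ Finset.Ico M N, (P (A n ∩ A l)).toReal) ≤ T N := by
      calc (∑ n ∈ Finset.Ico M N, ∑ l ∈ Finset.Ico M N, (P (A n ∩ A l)).toReal)
          ≤ ∑ n ∈ Finset.Ico M N, ∑ l ∈ Finset.range N, (P (A n ∩ A l)).toReal := by
            refine Finset.sum_le_sum fun n _ => ?_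
            exact Finset.sum_le_sum_of_subset_of_nonneg hsubset
              (fun _ _ _ => ENNReal.toReal_nonneg)
        _ ≤ T N := Finset.sum_le_sum_of_subset_of_nonneg hsubset
            (fun _ _ _ => Finset.sum_nonneg fun _ _ => ENNReal.toReal_nonneg)
    have key : (S N - S M) ^ 2 ≤ T N * C := by
      rw [hIco]
      exact (kochenCSReal P A hA M N (kochenCS P A hA M N)).trans (mul_le_mul_of_nonneg_right hT' hC0)
    have hSM0 : 0 ≤ S M := hSnonneg M
    have h2SM : 2 * S M ≤ ε * S N := by
      rw [div_le_iff₀ hε0] at h1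
      linarith [h1]
    have h2SMS : 2 * S M * S N ≤ ε * S N ^ 2 := by
      have := mul_le_mul_of_nonneg_right h2SM (by linarith : (0:ℝ) ≤ S N)
      nlinarith [this]
    have expand : S N ^ 2 ≤ T N * C + ε * S N ^ 2 := by
      nlinarith [key, sq_nonneg (S M)]
    show S N ^ 2 / T N ≤ C + δ
    rw [div_le_iff₀ hTpos]
    -- (1-ε) S N² ≤ T N C, and (1-ε)(1+δ) = 1, so S N² ≤ (1+δ) T N C ≤ (C+δ) T N
    nlinarith [expand, hεδ, mul_le_mul_of_nonneg_right hC1 (mul_nonneg hδ.le hTpos.le),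
      mul_pos hTpos hδ, sq_nonneg (S N)]
  have hcb : IsCoboundedUnder (· ≤ ·) atTop r :=
    isCoboundedUnder_le_of_le atTop fun N => div_nonneg (sq_nonneg _)
      (le_trans (hSnonneg N) (hTS N))
  exact limsup_le_of_le hcb hev
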